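/- Let K ⊆ ℝⁿ be a closed convex cone with polar cone K° = {x : ∀ k ∈ K, ⟨k, x⟩ ≤ 0}, and let y ∈ ℝⁿ. If x̂ is the projection of y onto K and x̂° is the projection of y onto K°, then ⟨x̂, x̂°⟩ = 0 and y = x̂ + x̂° (Moreau decomposition, forward direction). -/

import Mathlib

open scoped RealInnerProductSpace

set_option maxHeartbeats 1000000 in
private lemma vi_of_min {F : Type*} [NormedAddCommGroup F] [InnerProductSpace ℝ F]
    [CompleteSpace F] {S : Set F}
    (hS : Convex ℝ S) {y v : F} (hv : v ∈ S)
    (hmin : ∀ z ∈ S, ‖v - y‖ ≤ ‖z - y‖) :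
    ∀ w ∈ S, ⟪y - v, w - v⟫ ≤ 0 := by
  haveI : Nonempty S := ⟨⟨v, hv⟩⟩
  have key : ‖y - v‖ = ⨅ w : S, ‖y - (w : F)‖ := by
    refine le_antisymm (le_ciInf fun w => ?_) (ciInf_le ⟨0, fun r hr => ?_⟩ (⟨v, hv⟩ : S))
    · rw [norm_sub_rev, norm_sub_rev y _]
      exact hmin w w.2
    · obtain ⟨w, rfl⟩ := hr
      exact norm_nonneg _
  exact (norm_eq_iInf_iff_real_inner_le_zero hS hv).mp key

/-- Moreau decomposition, forward direction: if `x̂` is the projection of `y`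
onto a closed convex cone `K` and `x̂ᵒ` is the projection of `y` onto the polar
cone `Kᵒ`, then `⟪x̂, x̂ᵒ⟫ = 0` and `y = x̂ + x̂ᵒ`. -/
theorem moreau_forward (n : ℕ) (K : Set (EuclideanSpace ℝ (Fin n)))
    (hne : K.Nonempty) (hcl : IsClosed K) (hconv : Convex ℝ K)
    (hcone : ∀ (c : ℝ), 0 ≤ c → ∀ x ∈ K, c • x ∈ K)
    (y xhat xhato : EuclideanSpace ℝ (Fin n))
    (hx : xhat ∈ K) (hxmin : ∀ z ∈ K, ‖xhat - y‖ ≤ ‖z - y‖)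
    (hxo : xhato ∈ {x : EuclideanSpace ℝ (Fin n) | ∀ k ∈ K, ⟪k, x⟫ ≤ 0})
    (hxomin : ∀ z ∈ {x : EuclideanSpace ℝ (Fin n) | ∀ k ∈ K, ⟪k, x⟫ ≤ 0},
      ‖xhato - y‖ ≤ ‖z - y‖) :
    ⟪xhat, xhato⟫ = 0 ∧ y = xhat + xhato := by
  set P : Set (EuclideanSpace ℝ (Fin n)) :=
    {x : EuclideanSpace ℝ (Fin n) | ∀ k ∈ K, ⟪k, x⟫ ≤ 0} with hP
  have hPconv : Convex ℝ P := by
    intro a ha b hb s t hs ht hst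
    intro k hk
    calc ⟪k, s • a + t • b⟫ = s * ⟪k, a⟫ + t * ⟪k, b⟫ := by
          rw [inner_add_right, real_inner_smul_right, real_inner_smul_right]
      _ ≤ 0 := by nlinarith [ha k hk, hb k hk]
  -- variational inequality for K
  have hVI : ∀ w ∈ K, ⟪y - xhat, w - xhat⟫ ≤ 0 := vi_of_min hconv hx hxmin
  have h0K : (0 : EuclideanSpace ℝ (Fin n)) ∈ K := by
    obtain ⟨x, hxK⟩ := hne
    simpa using hcone 0 le_rfl x hxK
  have h2x : (2 : ℝ) • xhat ∈ K := hcone 2 (by norm_num) xhat hx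
  have hortho : ⟪y - xhat, xhat⟫ = 0 := by
    have h1 := hVI 0 h0K
    have h2 := hVI ((2 : ℝ) • xhat) h2x
    rw [zero_sub, inner_neg_right] at h1
    have : ((2 : ℝ) • xhat) - xhat = xhat := by
      rw [two_smul]; abel
    rw [this] at h2
    linarith
  -- y - xhat ∈ P
  have hmem : y - xhat ∈ P := by
    intro k hk
    have h := hVI k hk
    have : ⟪y - xhat, k⟫ ≤ 0 := by
      have := inner_sub_right (𝕜 := ℝ) (y - xhat) k xhat
      rw [this, hortho, sub_zero] at h
      exact h
    rwa [real_inner_comm]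
  -- VI for P at xhato
  have hVIo : ∀ w ∈ P, ⟪y - xhato, w - xhato⟫ ≤ 0 := vi_of_min hPconv hxo hxomin
  -- y - xhat also satisfies the VI on P
  have hVIu : ∀ w ∈ P, ⟪y - (y - xhat), w - (y - xhat)⟫ ≤ 0 := by
    intro w hw
    have h1 : ⟪xhat, w⟫ ≤ 0 := hw xhat hx
    have h2 : ⟪xhat, y - xhat⟫ = 0 := by
      rw [real_inner_comm]; exact hortho
    have : ⟪y - (y - xhat), w - (y - xhat)⟫ = ⟪xhat, w⟫ - ⟪xhat, y - xhat⟫ := by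
      simp [inner_sub_right]
    rw [this, h2, sub_zero]
    exact h1
  -- uniqueness: xhato = y - xhat
  have heq : xhato = y - xhat := by
    have h1 := hVIo (y - xhat) hmem
    have h2 := hVIu xhato hxo
    have hsum : ⟪xhato - (y - xhat), xhato - (y - xhat)⟫ ≤ 0 := by
      have e1 : ⟪y - xhato, (y - xhat) - xhato⟫ + ⟪y - (y - xhat), xhato - (y - xhat)⟫
          = ⟪xhato - (y - xhat), xhato - (y - xhat)⟫ := by
        have : (y : EuclideanSpace ℝ (Fin n)) - xhato = -(xhato - y) := by abel
        rw [← inner_neg_neg (𝕜 := ℝ) (y - xhato)]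
        have hn1 : -((y : EuclideanSpace ℝ (Fin n)) - xhato) = xhato - y := by abel
        have hn2 : -(((y : EuclideanSpace ℝ (Fin n)) - xhat) - xhato)
            = xhato - (y - xhat) := by abel
        rw [hn1, hn2, ← inner_add_left]
        congr 1
        abel
      linarith [e1 ▸ add_le_add h1 h2]
    have := real_inner_self_nonpos.mp hsum
    rwa [sub_eq_zero] at this
  constructor
  · rw [heq, ← hortho, real_inner_comm]
  · rw [heq]; abel
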